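/- Let M be an (|A|+ℵ₀)⁺-saturated model containing A, and p ∈ S(M). If p forks over A then p splits strongly over A. (Equivalently, if p does not split strongly over A, then p does not fork over A.) -/

import Mathlib

open FirstOrder Cardinal

universe u

variable {L : FirstOrder.Language.{u, u}} {M : Type u} [L.Structure M]

/-- A formula in `m` free variables together with a tuple of parameters from `M`. -/
structure PFormula (L : FirstOrder.Language.{u, u}) (M : Type u) [L.Structure M] (m : ℕ) where
  n : ℕ
  toFormula : L.Formula (Fin m ⊕ Fin n)
  par : Fin n → M

namespace PFormula

variable {m : ℕ}

/-- Realization of a parametrized formula by an `m`-tuple. -/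
def Realize (ψ : PFormula L M m) (a : Fin m → M) : Prop :=
  ψ.toFormula.Realize (Sum.elim a ψ.par)

/-- Realization of a parametrized formula in one variable by an element. -/
def Realize1 (ψ : PFormula L M 1) (a : M) : Prop :=
  ψ.Realize fun _ => a

/-- Negation of a parametrized formula. -/
def not (ψ : PFormula L M m) : PFormula L M m :=
  ⟨ψ.n, ψ.toFormula.not, ψ.par⟩

/-- The parameters of `ψ` all lie in `B`. -/
def Over (ψ : PFormula L M m) (B : Set M) : Prop :=
  ∀ i, ψ.par i ∈ B

end PFormula

/-- Two tuples have the same type over the parameter set `A`. -/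
def SameTypeOver (L : FirstOrder.Language.{u, u}) {M : Type u} [L.Structure M]
    (A : Set M) {γ : Type} (b c : γ → M) : Prop :=
  ∀ (k : ℕ) (φ : L.Formula (γ ⊕ Fin k)) (a : Fin k → M),
    (∀ i, a i ∈ A) → (φ.Realize (Sum.elim b a) ↔ φ.Realize (Sum.elim c a))

/-- A sequence of `d`-tuples, indexed by a linear order, is indiscernible over `A`. -/
def IndiscTupleSeqOver (L : FirstOrder.Language.{u, u}) {M : Type u} [L.Structure M]
    (A : Set M) {ι : Type*} [LinearOrder ι] {d : ℕ} (f : ι → Fin d → M) : Prop :=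
  ∀ (n : ℕ) (s t : Fin n → ι), StrictMono s → StrictMono t →
    SameTypeOver L A (fun q : Fin n × Fin d => f (s q.1) q.2)
      (fun q : Fin n × Fin d => f (t q.1) q.2)

/-- A sequence of elements, indexed by a linear order, is indiscernible over `A`. -/
def IndiscSeqOver (L : FirstOrder.Language.{u, u}) {M : Type u} [L.Structure M]
    (A : Set M) {ι : Type*} [LinearOrder ι] (f : ι → M) : Prop :=
  ∀ (n : ℕ) (s t : Fin n → ι), StrictMono s → StrictMono t →
    SameTypeOver L A (fun i => f (s i)) (fun i => f (t i))

/-- A family of elements is an indiscernible *set* over `A`: the type of a tuple of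
distinct elements depends only on its length. -/
def IndiscSetOver (L : FirstOrder.Language.{u, u}) {M : Type u} [L.Structure M]
    (A : Set M) {ι : Type*} (f : ι → M) : Prop :=
  ∀ (n : ℕ) (s t : Fin n → ι), Function.Injective s → Function.Injective t →
    SameTypeOver L A (fun i => f (s i)) (fun i => f (t i))

/-- `p` is a complete consistent `m`-type over `B`: all parameters come from `B`, for each
formula over `B` it contains the formula or its negation, and every finite subset is
realized (in the monster). -/
def IsTypeOver {m : ℕ} (p : Set (PFormula L M m)) (B : Set M) : Prop :=
  (∀ ψ ∈ p, ψ.Over B) ∧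
  (∀ ψ : PFormula L M m, ψ.Over B → ψ ∈ p ∨ ψ.not ∈ p) ∧
  (∀ s : Finset (PFormula L M m), ↑s ⊆ p → ∃ a : Fin m → M, ∀ ψ ∈ s, ψ.Realize a)

/-- `p` is finitely satisfiable in `A`: every finite subset of `p` is realized by a tuple
from `A`. -/
def FinSatIn {m : ℕ} (p : Set (PFormula L M m)) (A : Set M) : Prop :=
  ∀ s : Finset (PFormula L M m), ↑s ⊆ p →
    ∃ a : Fin m → M, (∀ i, a i ∈ A) ∧ ∀ ψ ∈ s, ψ.Realize a

/-- The complete type of an element `a` over the set `C`. -/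
def tpOver (L : FirstOrder.Language.{u, u}) {M : Type u} [L.Structure M]
    (a : M) (C : Set M) : Set (PFormula L M 1) :=
  {ψ | ψ.Over C ∧ ψ.Realize1 a}

/-- `p` (a type with parameters in `B`) does not split over `A`. -/
def DoesNotSplitOver {m : ℕ} (p : Set (PFormula L M m)) (B A : Set M) : Prop :=
  ∀ (n : ℕ) (b c : Fin n → M) (φ : L.Formula (Fin m ⊕ Fin n)),
    (∀ i, b i ∈ B) → (∀ i, c i ∈ B) → SameTypeOver L A b c →
    ((⟨n, φ, b⟩ : PFormula L M m) ∈ p ↔ (⟨n, φ, c⟩ : PFormula L M m) ∈ p)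

/-- `p` (a type over `B`) is definable over `A`. -/
def DefinableOver {m : ℕ} (p : Set (PFormula L M m)) (B A : Set M) : Prop :=
  ∀ (n : ℕ) (φ : L.Formula (Fin m ⊕ Fin n)),
    ∃ (k : ℕ) (d : L.Formula (Fin n ⊕ Fin k)) (e : Fin k → M), (∀ i, e i ∈ A) ∧
      ∀ b : Fin n → M, (∀ i, b i ∈ B) →
        ((⟨n, φ, b⟩ : PFormula L M m) ∈ p ↔ d.Realize (Sum.elim b e))

/-- The parametrized formula `ψ` divides over `A`. -/
def PFormula.Divides {m : ℕ} (ψ : PFormula L M m) (A : Set M) : Prop :=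
  ∃ (f : ℕ → Fin ψ.n → M) (k : ℕ), 0 < k ∧ f 0 = ψ.par ∧ IndiscTupleSeqOver L A f ∧
    ∀ s : Finset ℕ, s.card = k →
      ¬ ∃ a : Fin m → M, ∀ i ∈ s, ψ.toFormula.Realize (Sum.elim a (f i))

/-- The (partial) type `p` forks over `A`: some finite subset of `p` implies a finite
disjunction of formulas each of which divides over `A`. -/
def ForksOver {m : ℕ} (p : Set (PFormula L M m)) (A : Set M) : Prop :=
  ∃ (r : ℕ) (ψs : Fin r → PFormula L M m), (∀ j, (ψs j).Divides A) ∧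
    ∃ s : Finset (PFormula L M m), ↑s ⊆ p ∧
      ∀ a : Fin m → M, (∀ χ ∈ s, χ.Realize a) → ∃ j, (ψs j).Realize a

/-- `p` splits strongly over `A`. -/
def SplitsStronglyOver {m : ℕ} (p : Set (PFormula L M m)) (A : Set M) : Prop :=
  ∃ (n : ℕ) (f : ℕ → Fin n → M) (φ : L.Formula (Fin m ⊕ Fin n)),
    IndiscTupleSeqOver L A f ∧
    (⟨n, φ, f 0⟩ : PFormula L M m) ∈ p ∧ (PFormula.not ⟨n, φ, f 1⟩ : PFormula L M m) ∈ p

/-- Two tuples are of Lascar distance one over `A`: they lie on a common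
`A`-indiscernible sequence. -/
def LascarDistOne (L : FirstOrder.Language.{u, u}) {M : Type u} [L.Structure M]
    (A : Set M) {n : ℕ} (b c : Fin n → M) : Prop :=
  ∃ f : ℕ → Fin n → M, IndiscTupleSeqOver L A f ∧ ∃ i j : ℕ, f i = b ∧ f j = c

/-- Two tuples have the same Lascar strong type over `A` (finite Lascar distance). -/
def SameLstp (L : FirstOrder.Language.{u, u}) {M : Type u} [L.Structure M]
    (A : Set M) {n : ℕ} (b c : Fin n → M) : Prop :=
  Relation.ReflTransGen (fun x y => LascarDistOne L A x y) b c

/-- `p` (a type over `B`) Lascar-splits over `A`. -/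
def LascarSplitsOver {m : ℕ} (p : Set (PFormula L M m)) (B A : Set M) : Prop :=
  ∃ (n : ℕ) (b c : Fin n → M) (φ : L.Formula (Fin m ⊕ Fin n)),
    (∀ i, b i ∈ B) ∧ (∀ i, c i ∈ B) ∧ SameLstp L A b c ∧
    (⟨n, φ, b⟩ : PFormula L M m) ∈ p ∧ (PFormula.not ⟨n, φ, c⟩ : PFormula L M m) ∈ p

/-- The structure `M` is NIP ("dependent"): no formula alternates infinitely often on an
indiscernible sequence. -/
def IsNIP (L : FirstOrder.Language.{u, u}) (M : Type u) [L.Structure M] : Prop :=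
  ∀ (d k : ℕ) (φ : L.Formula (Fin d ⊕ Fin k)) (f : ℕ → Fin d → M) (c : Fin k → M),
    IndiscTupleSeqOver L (∅ : Set M) f →
    ¬ ({i : ℕ | φ.Realize (Sum.elim (f i) c)}.Infinite ∧
        {i : ℕ | ¬ φ.Realize (Sum.elim (f i) c)}.Infinite)

/-- The subset `N` of the monster is `κ`-saturated: every type over a subset of `N` of
size `< κ` which is finitely satisfiable is realized inside `N`. -/
def SetSaturated (L : FirstOrder.Language.{u, u}) {M : Type u} [L.Structure M]
    (N : Set M) (κ : Cardinal.{u}) : Prop :=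
  ∀ C : Set M, C ⊆ N → #C < κ → ∀ (m : ℕ) (p : Set (PFormula L M m)),
    (∀ ψ ∈ p, ψ.Over C) →
    (∀ s : Finset (PFormula L M m), ↑s ⊆ p → ∃ a : Fin m → M, ∀ ψ ∈ s, ψ.Realize a) →
    ∃ a : Fin m → M, (∀ i, a i ∈ N) ∧ ∀ ψ ∈ p, ψ.Realize a

/-- `M` is a monster model: it is saturated in every cardinality below `#M`. -/
def IsMonster (L : FirstOrder.Language.{u, u}) (M : Type u) [L.Structure M] : Prop :=
  ∀ κ : Cardinal.{u}, κ < #M → SetSaturated L (Set.univ : Set M) κ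

/-- The average type of an `ω`-indexed indiscernible set over `C`: formulas over `C` true
of all but finitely many elements of the set. -/
def AvSet (L : FirstOrder.Language.{u, u}) {M : Type u} [L.Structure M]
    (f : ℕ → M) (C : Set M) : Set (PFormula L M 1) :=
  {ψ | ψ.Over C ∧ {i : ℕ | ¬ ψ.Realize1 (f i)}.Finite}

/-- The average type of an endless indiscernible sequence over `C`: formulas over `C`
true of all sufficiently late elements of the sequence. -/
def AvSeq (L : FirstOrder.Language.{u, u}) {M : Type u} [L.Structure M]
    {ι : Type*} [LinearOrder ι] (f : ι → M) (C : Set M) : Set (PFormula L M 1) :=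
  {ψ | ψ.Over C ∧ ∃ i₀ : ι, ∀ i ≥ i₀, ψ.Realize1 (f i)}

/-- The algebraic closure of `A` in `M`. -/
def aclSet (L : FirstOrder.Language.{u, u}) {M : Type u} [L.Structure M]
    (A : Set M) : Set M :=
  {a | ∃ ψ : PFormula L M 1, ψ.Over A ∧ ψ.Realize1 a ∧ {x : M | ψ.Realize1 x}.Finite}

/-- `p ∈ S(A)` is generically stable: there is a nonforking sequence of realizations of
`p` over `A` which is an indiscernible set. -/
def GenericallyStable (p : Set (PFormula L M 1)) (A : Set M) : Prop :=
  ∃ f : ℕ → M,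
    (∀ i, ∀ ψ ∈ p, ψ.Realize1 (f i)) ∧
    IndiscSetOver L A f ∧
    ∀ i : ℕ, ¬ ForksOver (tpOver L (f i) (A ∪ f '' {j | j < i})) A

/-- The Boolean algebra of `B`-definable subsets of `A^m`. -/
def DefSub (L : FirstOrder.Language.{u, u}) {M : Type u} [L.Structure M]
    (A B : Set M) (m : ℕ) : Set (Set (Fin m → M)) :=
  {S | ∃ ψ : PFormula L M m, ψ.Over B ∧ S = {a | (∀ i, a i ∈ A) ∧ ψ.Realize a}}

/-- An ultrafilter on the Boolean algebra of `B`-definable subsets of `A^m`. -/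
structure UltraOn (L : FirstOrder.Language.{u, u}) {M : Type u} [L.Structure M]
    (A B : Set M) (m : ℕ) where
  sets : Set (Set (Fin m → M))
  subset_def : sets ⊆ DefSub L A B m
  inter_mem : ∀ S ∈ sets, ∀ T ∈ sets, S ∩ T ∈ sets
  superset_mem : ∀ S ∈ sets, ∀ T ∈ DefSub L A B m, S ⊆ T → T ∈ sets
  nonempty_mem : ∀ S ∈ sets, S.Nonempty
  ultra : ∀ S ∈ DefSub L A B m,
    S ∈ sets ∨ ({a : Fin m → M | ∀ i, a i ∈ A} \ S) ∈ sets

/-- The average type of an ultrafilter on `Def_m(A,B)` over `B`. -/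
def AvU {A B : Set M} {m : ℕ} (U : UltraOn L A B m) : Set (PFormula L M m) :=
  {ψ | ψ.Over B ∧ {a : Fin m → M | (∀ i, a i ∈ A) ∧ ψ.Realize a} ∈ U.sets}

namespace ForkAux

open FirstOrder Language Set

/-- Finset-indexed conjunction (old Mathlib `BoundedFormula.iInf`). -/
noncomputable def fsInf {L : FirstOrder.Language} {α β : Type*} {n : ℕ} (s : Finset β)
    (f : β → L.BoundedFormula α n) : L.BoundedFormula α n :=
  (s.toList.map f).foldr (· ⊓ ·) ⊤

theorem realize_fsInf {L : FirstOrder.Language} {M : Type*} [L.Structure M] {α β : Type*} {n : ℕ}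
    (s : Finset β) (f : β → L.BoundedFormula α n) (v : α → M) (v' : Fin n → M) :
    (fsInf s f).Realize v v' ↔ ∀ b ∈ s, (f b).Realize v v' := by
  simp only [fsInf, BoundedFormula.realize_foldr_inf, List.mem_map, Finset.mem_toList,
    forall_exists_index, and_imp, forall_apply_eq_imp_iff₂]

/-- Old Mathlib `Formula.iExs` (relabel, then existentially quantify). -/
noncomputable def fsExs {L : FirstOrder.Language} {α β γ : Type*} [Finite γ]
    (φ : L.Formula α) (f : α → β ⊕ γ) : L.Formula β :=
  (φ.relabel f).iExs γ

theorem realize_fsExs {L : FirstOrder.Language} {M : Type*} [L.Structure M] {α β γ : Type*}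
    [Finite γ] {f : α → β ⊕ γ} {φ : L.Formula α} {v : β → M} :
    (fsExs φ f).Realize v ↔ ∃ (i : γ → M), φ.Realize (fun a => Sum.elim v i (f a)) := by
  simp only [fsExs, Formula.realize_iExs, Formula.realize_relabel]
  rfl

theorem sto_symm {A : Set M} {γ : Type} {b c : γ → M} (h : SameTypeOver L A b c) :
    SameTypeOver L A c b := fun k φ a ha => (h k φ a ha).symm

theorem sto_trans {A : Set M} {γ : Type} {b c d : γ → M} (h1 : SameTypeOver L A b c)
    (h2 : SameTypeOver L A c d) : SameTypeOver L A b d :=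
  fun k φ a ha => (h1 k φ a ha).trans (h2 k φ a ha)

theorem sto_mono {A C : Set M} {γ : Type} {b c : γ → M} (hAC : A ⊆ C)
    (h : SameTypeOver L C b c) : SameTypeOver L A b c :=
  fun k φ a ha => h k φ a fun i => hAC (ha i)

theorem sto_comp {A : Set M} {γ γ' : Type} {b c : γ → M} (h : SameTypeOver L A b c)
    (e : γ' → γ) : SameTypeOver L A (b ∘ e) (c ∘ e) := by
  intro k φ a ha
  have := h k (φ.relabel (Sum.map e id)) a ha
  simpa [Formula.realize_relabel, Sum.elim_comp_map] using this

theorem split_finVars {β : Type v} {α : Type w} (φ : L.Formula (β ⊕ α)) :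
    ∃ (k : ℕ) (e : Fin k → α) (φ' : L.Formula (β ⊕ Fin k)),
      ∀ v : β ⊕ α → M,
        (φ.Realize v ↔ φ'.Realize (Sum.elim (v ∘ Sum.inl) (v ∘ Sum.inr ∘ e))) := by
  classical
  set s0 : Set (β ⊕ α) := ↑φ.freeVarFinset with hs0
  set S : Finset α :=
    φ.freeVarFinset.biUnion
      (fun x => Sum.elim (fun _ => (∅ : Finset α)) (fun a => {a}) x) with hS
  have hmem : ∀ a : α, Sum.inr a ∈ φ.freeVarFinset → a ∈ S := by
    intro a ha
    refine Finset.mem_biUnion.2 ⟨Sum.inr a, ha, ?_⟩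
    simp
  let φ₀ : L.Formula ↥s0 := φ.restrictFreeVar (Set.inclusion subset_rfl)
  let g : ↥s0 → β ⊕ Fin S.card := fun x =>
    match x with
    | ⟨Sum.inl b, _⟩ => Sum.inl b
    | ⟨Sum.inr a, h⟩ => Sum.inr (S.equivFin ⟨a, hmem a (by exact_mod_cast h)⟩)
  refine ⟨S.card, fun i => ((S.equivFin.symm i : ↥S) : α), φ₀.relabel g, ?_⟩
  intro v
  have h2 : (Sum.elim (v ∘ Sum.inl) (v ∘ Sum.inr ∘ fun i => ((S.equivFin.symm i : ↥S) : α))) ∘ g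
      = v ∘ (Subtype.val : ↥s0 → β ⊕ α) := by
    funext x
    rcases x with ⟨x, hx⟩
    rcases x with b | a
    · rfl
    · show v (Sum.inr (((S.equivFin.symm (S.equivFin ⟨a, _⟩)) : ↥S) : α)) = v (Sum.inr a)
      rw [Equiv.symm_apply_apply]
  rw [Formula.realize_relabel, h2]
  exact (BoundedFormula.realize_restrictFreeVar' subset_rfl).symm

theorem key_transfer {C : Set M} {β : Type} {b c : β → M} (hst : SameTypeOver L C b c)
    (φ : L.Formula (β ⊕ ↥C)) :
    φ.Realize (Sum.elim b (fun x : ↥C => (x : M))) ↔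
    φ.Realize (Sum.elim c (fun x : ↥C => (x : M))) := by
  obtain ⟨k, e, φ', hφ'⟩ := split_finVars (M := M) φ
  rw [hφ' (Sum.elim b _), hφ' (Sum.elim c _)]
  have h1 : ∀ w : β → M,
      Sum.elim ((Sum.elim w (fun x : ↥C => (x : M))) ∘ Sum.inl)
        ((Sum.elim w (fun x : ↥C => (x : M))) ∘ Sum.inr ∘ e)
      = Sum.elim w (fun i => ((e i : ↥C) : M)) := by
    intro w; funext y; rcases y with y | i <;> rfl
  rw [h1 b, h1 c]
  exact hst k φ' _ (fun i => (e i).2)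

theorem prefix_to_full {C : Set M} {F G : ℕ → M}
    (hE : ∀ n : ℕ, SameTypeOver L C (fun i : Fin n => F ↑i) (fun i : Fin n => G ↑i)) :
    SameTypeOver L C F G := by
  intro k φ a ha
  obtain ⟨k', e, φ', hφ'⟩ := split_finVars (M := M) (φ.relabel Sum.swap)
  have hswap : ∀ w : ℕ → M,
      φ.Realize (Sum.elim w a) ↔ φ'.Realize (Sum.elim a (w ∘ e)) := by
    intro w
    have h1 : (φ.relabel Sum.swap).Realize (Sum.elim a w) ↔ φ.Realize (Sum.elim w a) := by
      rw [Formula.realize_relabel]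
      have : (Sum.elim a w) ∘ Sum.swap = Sum.elim w a := by
        funext y; rcases y with y | y <;> rfl
      rw [this]
    rw [← h1, hφ' (Sum.elim a w)]
    have h2 : Sum.elim ((Sum.elim a w) ∘ Sum.inl) ((Sum.elim a w) ∘ Sum.inr ∘ e)
        = Sum.elim a (w ∘ e) := by
      funext y; rcases y with y | y <;> rfl
    rw [h2]
  rw [hswap F, hswap G]
  set n : ℕ := (Finset.univ.sup fun i : Fin k' => e i) + 1 with hn
  have he : ∀ i, e i < n := fun i =>
    Nat.lt_succ_of_le (Finset.le_sup (f := fun i : Fin k' => e i) (Finset.mem_univ i))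
  have hc := sto_comp (hE n) (fun i : Fin k' => (⟨e i, he i⟩ : Fin n))
  have := hc k (φ'.relabel Sum.swap) a ha
  rw [Formula.realize_relabel, Formula.realize_relabel] at this
  have hv : ∀ w : ℕ → M,
      (Sum.elim ((fun i : Fin n => w ↑i) ∘ fun i : Fin k' => (⟨e i, he i⟩ : Fin n)) a) ∘ Sum.swap
        = Sum.elim a (w ∘ e) := by
    intro w; funext y; rcases y with y | y <;> rfl
  rw [hv F, hv G] at this
  exact this

theorem step_extend {N A : Set M}
    (hsat : SetSaturated L N (Order.succ (#A + ℵ₀)))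
    {C : Set M} (hCN : C ⊆ N) (hC : #C ≤ #A + ℵ₀)
    (F : ℕ → M) (n : ℕ) (g : Fin n → M) (hgN : ∀ i, g i ∈ N)
    (hE : SameTypeOver L C (fun i : Fin n => F ↑i) g) :
    ∃ x : M, x ∈ N ∧ SameTypeOver L C (fun i : Fin (n + 1) => F ↑i) (Fin.snoc g x) := by
  classical
  -- packaging formulas over `(Fin n ⊕ Fin 1) ⊕ Fin k` with `C`-parameters into `PFormula`s
  set Γ := (Σ k : ℕ, L.Formula ((Fin n ⊕ Fin 1) ⊕ Fin k) × (Fin k → ↥C)) with hΓ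
  let ρ : (γ : Γ) → ((Fin n ⊕ Fin 1) ⊕ Fin γ.1) → (Fin 1 ⊕ Fin (n + γ.1)) := fun γ =>
    Sum.elim
      (Sum.elim (fun i => Sum.inr (finSumFinEquiv (Sum.inl i))) (fun _ => Sum.inl 0))
      (fun t => Sum.inr (finSumFinEquiv (Sum.inr t)))
  let pack : Γ → PFormula L M 1 := fun γ =>
    ⟨n + γ.1, γ.2.1.relabel (ρ γ),
      Sum.elim g (fun t => ((γ.2.2 t : M))) ∘ finSumFinEquiv.symm⟩
  have hpack : ∀ (γ : Γ) (x : M), (pack γ).Realize1 x ↔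
      γ.2.1.Realize (Sum.elim (Sum.elim g (fun _ : Fin 1 => x)) (fun t => ((γ.2.2 t : M)))) := by
    intro γ x
    show (γ.2.1.relabel (ρ γ)).Realize
      (Sum.elim (fun _ : Fin 1 => x)
        (Sum.elim g (fun t => ((γ.2.2 t : M))) ∘ finSumFinEquiv.symm)) ↔ _
    rw [Formula.realize_relabel]
    have : (Sum.elim (fun _ : Fin 1 => x)
        (Sum.elim g (fun t => ((γ.2.2 t : M))) ∘ finSumFinEquiv.symm)) ∘ (ρ γ)
        = Sum.elim (Sum.elim g (fun _ : Fin 1 => x)) (fun t => ((γ.2.2 t : M))) := by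
      funext y
      rcases y with (i | j) | t
      · show Sum.elim g _ (finSumFinEquiv.symm (finSumFinEquiv (Sum.inl i))) = g i
        rw [Equiv.symm_apply_apply]; rfl
      · rfl
      · show Sum.elim g _ (finSumFinEquiv.symm (finSumFinEquiv (Sum.inr t))) = _
        rw [Equiv.symm_apply_apply]; rfl
    rw [this]
  set T : Set Γ := {γ : Γ | γ.2.1.Realize
      (Sum.elim (Sum.elim (fun i : Fin n => F ↑i) (fun _ : Fin 1 => F ↑n))
        (fun t => ((γ.2.2 t : M))))} with hT
  -- apply saturation to q := pack '' T
  have hCg : C ∪ Set.range g ⊆ N :=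
    Set.union_subset hCN (Set.range_subset_iff.2 hgN)
  have hcard : #↑(C ∪ Set.range g) < Order.succ (#A + ℵ₀) := by
    rw [Order.lt_succ_iff]
    calc #↑(C ∪ Set.range g) ≤ #↑C + #↑(Set.range g) := mk_union_le _ _
      _ ≤ (#A + ℵ₀) + ℵ₀ := add_le_add hC (Set.finite_range g).lt_aleph0.le
      _ = #A + ℵ₀ := by rw [add_assoc, aleph0_add_aleph0]
  have hOverq : ∀ ψ ∈ pack '' T, ψ.Over (C ∪ Set.range g) := by
    rintro ψ ⟨γ, hγ, rfl⟩ t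
    show Sum.elim g (fun t => ((γ.2.2 t : M))) (finSumFinEquiv.symm t) ∈ _
    rcases finSumFinEquiv.symm t with i | u
    · exact Or.inr (Set.mem_range_self i)
    · exact Or.inl (γ.2.2 u).2
  have hfinsat : ∀ s : Finset (PFormula L M 1), ↑s ⊆ pack '' T →
      ∃ a : Fin 1 → M, ∀ ψ ∈ s, ψ.Realize a := by
    intro t ht
    obtain ⟨tG, htG, rfl⟩ := Finset.subset_set_image_iff.1 ht
    let conv : Γ → L.Formula ((Fin n ⊕ Fin 1) ⊕ ↥C) := fun γ =>
      γ.2.1.relabel (Sum.map id γ.2.2)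
    let Θ : L.Formula ((Fin n ⊕ Fin 1) ⊕ ↥C) := fsInf tG conv
    let fex : ((Fin n ⊕ Fin 1) ⊕ ↥C) → ((Fin n ⊕ ↥C) ⊕ Fin 1) :=
      Sum.elim (Sum.elim (fun i => Sum.inl (Sum.inl i)) (fun j => Sum.inr j))
        (fun u => Sum.inl (Sum.inr u))
    let Θ' : L.Formula (Fin n ⊕ ↥C) := ForkAux.fsExs Θ fex
    have hΘsem : ∀ (X : (Fin n ⊕ Fin 1) → M),
        Θ.Realize (Sum.elim X (fun u : ↥C => (u : M))) ↔
        ∀ γ ∈ tG, γ.2.1.Realize (Sum.elim X (fun t => ((γ.2.2 t : M)))) := by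
      intro X
      refine Iff.trans (realize_fsInf tG conv _ default)
        (forall₂_congr fun γ hγ => ?_)
      refine Iff.trans (Formula.realize_relabel) ?_
      have : (Sum.elim X (fun u : ↥C => (u : M))) ∘ (Sum.map id γ.2.2)
          = Sum.elim X (fun t => ((γ.2.2 t : M))) := by
        funext y; rcases y with y | t <;> rfl
      rw [this]
    have hΘ'sem : ∀ (w : Fin n → M),
        Θ'.Realize (Sum.elim w (fun u : ↥C => (u : M))) ↔
        ∃ z : M, ∀ γ ∈ tG,
          γ.2.1.Realize (Sum.elim (Sum.elim w (fun _ : Fin 1 => z))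
            (fun t => ((γ.2.2 t : M)))) := by
      intro w
      rw [realize_fsExs]
      constructor
      · rintro ⟨i, hi⟩
        refine ⟨i 0, ?_⟩
        have hval : (fun y => Sum.elim (Sum.elim w (fun u : ↥C => (u : M))) i (fex y)) =
            Sum.elim (Sum.elim (Sum.elim w (fun _ : Fin 1 => i 0)) (fun u : ↥C => (u : M)) ∘ Sum.inl)
              ((Sum.elim (Sum.elim w (fun _ : Fin 1 => i 0)) (fun u : ↥C => (u : M))) ∘ Sum.inr) := by
          funext y
          rcases y with (y | t) | u
          · rfl
          · show i t = i 0
            rw [Subsingleton.elim t 0]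
          · rfl
        rw [hval] at hi
        have hi' : Θ.Realize (Sum.elim (Sum.elim w (fun _ : Fin 1 => i 0)) (fun u : ↥C => (u : M))) := by
          have : Sum.elim ((Sum.elim (Sum.elim w (fun _ : Fin 1 => i 0)) (fun u : ↥C => (u : M))) ∘ Sum.inl)
              ((Sum.elim (Sum.elim w (fun _ : Fin 1 => i 0)) (fun u : ↥C => (u : M))) ∘ Sum.inr)
              = Sum.elim (Sum.elim w (fun _ : Fin 1 => i 0)) (fun u : ↥C => (u : M)) := by
            funext y; rcases y with y | y <;> rfl
          rwa [this] at hi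
        exact (hΘsem (Sum.elim w (fun _ : Fin 1 => i 0))).1 hi'
      · rintro ⟨z, hz⟩
        refine ⟨fun _ => z, ?_⟩
        have hval : (fun y => Sum.elim (Sum.elim w (fun u : ↥C => (u : M))) (fun _ : Fin 1 => z) (fex y)) =
            Sum.elim (Sum.elim w (fun _ : Fin 1 => z)) (fun u : ↥C => (u : M)) := by
          funext y; rcases y with (y | t) | u <;> rfl
        rw [hval]
        exact (hΘsem (Sum.elim w (fun _ : Fin 1 => z))).2 hz
    -- F-side realization
    have hFside : Θ'.Realize (Sum.elim (fun i : Fin n => F ↑i) (fun u : ↥C => (u : M))) := by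
      refine (hΘ'sem _).2 ⟨F ↑n, fun γ hγ => ?_⟩
      exact htG hγ
    have hGside := (ForkAux.key_transfer hE Θ').1 hFside
    obtain ⟨z, hz⟩ := (hΘ'sem g).1 hGside
    refine ⟨fun _ => z, ?_⟩
    intro ψ hψ
    obtain ⟨γ, hγ, rfl⟩ := Finset.mem_image.1 hψ
    exact (hpack γ z).2 (hz γ hγ)
  obtain ⟨a, haN, haq⟩ := hsat (C ∪ Set.range g) hCg hcard 1 (pack '' T) hOverq hfinsat
  set x := a 0 with hx
  have hax : a = fun _ => x := funext fun j => by rw [Subsingleton.elim j 0]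
  refine ⟨x, haN 0, ?_⟩
  -- now prove the extended SameTypeOver
  intro k φk cc hcc
  let sp : Fin (n + 1) → Fin n ⊕ Fin 1 := fun j => finSumFinEquiv.symm j
  let φd : L.Formula ((Fin n ⊕ Fin 1) ⊕ Fin k) := φk.relabel (Sum.map sp id)
  have hval : ∀ (w : Fin n → M) (z : M),
      (Sum.elim (Sum.elim w (fun _ : Fin 1 => z)) cc) ∘ (Sum.map sp id)
        = Sum.elim (Fin.snoc w z) cc := by
    intro w z
    funext y
    rcases y with j | t
    · show Sum.elim w (fun _ : Fin 1 => z) (finSumFinEquiv.symm j) = (Fin.snoc w z : Fin (n+1) → M) j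
      rcases h : finSumFinEquiv.symm j with i | u
      · have hj : j = finSumFinEquiv (Sum.inl i) := by rw [← h, Equiv.apply_symm_apply]
        rw [hj, finSumFinEquiv_apply_left]
        show w i = (Fin.snoc w z : Fin (n+1) → M) (Fin.castSucc i)
        rw [Fin.snoc_castSucc]
      · have hj : j = finSumFinEquiv (Sum.inr u) := by rw [← h, Equiv.apply_symm_apply]
        have hu : u = 0 := Subsingleton.elim u 0
        rw [hj, hu, finSumFinEquiv_apply_right]
        show z = (Fin.snoc w z : Fin (n+1) → M) (Fin.last n)
        rw [Fin.snoc_last]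
    · rfl
  have hFsnoc : (fun i : Fin (n + 1) => F ↑i) = Fin.snoc (fun i : Fin n => F ↑i) (F ↑n) := by
    funext i
    refine Fin.lastCases ?_ ?_ i
    · rw [Fin.snoc_last]; rfl
    · intro j
      rw [Fin.snoc_castSucc]
      simp
  have hφd : ∀ (w : Fin n → M) (z : M),
      φd.Realize (Sum.elim (Sum.elim w (fun _ : Fin 1 => z)) cc) ↔
      φk.Realize (Sum.elim (Fin.snoc w z) cc) := by
    intro w z
    rw [show φd = φk.relabel (Sum.map sp id) from rfl, Formula.realize_relabel, hval]
  constructor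
  · intro hF
    have hγT : (⟨k, φd, fun t => ⟨cc t, hcc t⟩⟩ : Γ) ∈ T := by
      show φd.Realize _
      have : (fun t => (((⟨cc t, hcc t⟩ : ↥C) : M))) = cc := rfl
      rw [this]
      rw [hφd]
      rw [← hFsnoc]
      exact hF
    have := haq _ (Set.mem_image_of_mem pack hγT)
    rw [hax] at this
    have h2 := (hpack ⟨k, φd, fun t => ⟨cc t, hcc t⟩⟩ x).1 this
    rw [show (fun t => (((⟨cc t, hcc t⟩ : ↥C) : M))) = cc from rfl] at h2
    exact (hφd g x).1 h2
  · intro hG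
    by_contra hF
    have hγT : (⟨k, φd.not, fun t => ⟨cc t, hcc t⟩⟩ : Γ) ∈ T := by
      show φd.not.Realize _
      rw [Formula.realize_not]
      rw [show (fun t => (((⟨cc t, hcc t⟩ : ↥C) : M))) = cc from rfl]
      rw [hφd, ← hFsnoc]
      exact hF
    have := haq _ (Set.mem_image_of_mem pack hγT)
    rw [hax] at this
    have h2 := (hpack ⟨k, φd.not, fun t => ⟨cc t, hcc t⟩⟩ x).1 this
    rw [show (fun t => (((⟨cc t, hcc t⟩ : ↥C) : M))) = cc from rfl] at h2
    rw [Formula.realize_not] at h2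
    exact absurd ((hφd g x).2 hG) h2

theorem exists_copy {N A : Set M}
    (hsat : SetSaturated L N (Order.succ (#A + ℵ₀)))
    {C : Set M} (hCN : C ⊆ N) (hC : #C ≤ #A + ℵ₀) (F : ℕ → M) :
    ∃ G : ℕ → M, (∀ t, G t ∈ N) ∧ SameTypeOver L C F G := by
  classical
  have step := fun (n : ℕ) (g : Fin n → M) (hgN : ∀ i, g i ∈ N)
      (hE : SameTypeOver L C (fun i : Fin n => F ↑i) g) =>
    step_extend hsat hCN hC F n g hgN hE
  choose xf hxN hxE using step
  let P : (n : ℕ) → (Fin n → M) → Prop := fun n g =>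
    (∀ i, g i ∈ N) ∧ SameTypeOver L C (fun i : Fin n => F ↑i) g
  let ch : (n : ℕ) → {g : Fin n → M // P n g} := fun n =>
    Nat.rec (motive := fun n => {g : Fin n → M // P n g})
      ⟨fun i : Fin 0 => F ↑i, fun i => i.elim0, fun k φ a ha => Iff.rfl⟩
      (fun k ih =>
        ⟨Fin.snoc ih.1 (xf k ih.1 ih.2.1 ih.2.2),
          by
            constructor
            · intro i
              refine Fin.lastCases ?_ ?_ i
              · rw [Fin.snoc_last]
                exact hxN k ih.1 ih.2.1 ih.2.2
              · intro j
                rw [Fin.snoc_castSucc]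
                exact ih.2.1 j
            · exact hxE k ih.1 ih.2.1 ih.2.2⟩) n
  have hch : ∀ n : ℕ, (ch (n + 1)).1 = Fin.snoc (ch n).1
      (xf n (ch n).1 (ch n).2.1 (ch n).2.2) := fun n => rfl
  let G : ℕ → M := fun t => (ch (t + 1)).1 (Fin.last t)
  have hco : ∀ (n : ℕ) (i : Fin n), (ch n).1 i = G ↑i := by
    intro n
    induction n with
    | zero => exact fun i => i.elim0
    | succ k ih =>
      intro i
      refine Fin.lastCases ?_ ?_ i
      · rfl
      · intro j
        rw [hch, Fin.snoc_castSucc]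
        have h2 := ih j
        have h3 : ((Fin.castSucc j : Fin (k + 1)) : ℕ) = (j : ℕ) := rfl
        rw [h3]
        exact h2
  refine ⟨G, fun t => (ch (t + 1)).2.1 (Fin.last t), ?_⟩
  apply prefix_to_full
  intro n
  have : (fun i : Fin n => G ↑i) = (ch n).1 := funext fun i => (hco n i).symm
  rw [this]
  exact (ch n).2.2

end ForkAux

/-- If `N` is an `(|A|+ℵ₀)⁺`-saturated model containing `A` and `p ∈ S(N)`
forks over `A`, then `p` splits strongly over `A`. -/
theorem forking_implies_strong_splitting_over_saturated_model {m : ℕ}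
    (A N : Set M) (hAN : A ⊆ N)
    (hsat : SetSaturated L N (Order.succ (#A + ℵ₀)))
    (p : Set (PFormula L M m)) (hp : IsTypeOver p N)
    (hfork : ForksOver p A) :
    SplitsStronglyOver p A := by
  classical
  obtain ⟨hOver, hComplete, hCon⟩ := hp
  obtain ⟨r, ψs, hdiv, s, hsp, himp⟩ := hfork
  choose f kk hkpos hf0 hindf hincf using hdiv
  have main : (∃ g : (j : Fin r) → ℕ → Fin (ψs j).n → M,
      (∀ j i v, g j i v ∈ N) ∧ (∀ j, IndiscTupleSeqOver L A (g j)) ∧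
      (∀ (j : Fin r) (sf : Finset ℕ), sf.card = kk j →
        ¬ ∃ a : Fin m → M, ∀ i ∈ sf, (ψs j).toFormula.Realize (Sum.elim a (g j i))) ∧
      (∀ a : Fin m → M, (∀ χ ∈ s, χ.Realize a) →
        ∃ j, (ψs j).toFormula.Realize (Sum.elim a (g j 0)))) →
      SplitsStronglyOver p A := by
    rintro ⟨g, hgN, hgind, hginc, hgimp⟩
    set Pf : Fin r → ℕ → PFormula L M m :=
      fun j i => ⟨(ψs j).n, (ψs j).toFormula, g j i⟩ with hPf
    have hPfN : ∀ j i, (Pf j i).Over N := fun j i v => hgN j i v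
    have hjex : ∃ j : Fin r, Pf j 0 ∈ p := by
      by_contra hno
      push_neg at hno
      have hnot : ∀ j, (Pf j 0).not ∈ p := fun j =>
        (hComplete (Pf j 0) (hPfN j 0)).resolve_left (hno j)
      obtain ⟨a, ha⟩ := hCon (s ∪ Finset.image (fun j => (Pf j 0).not) Finset.univ) (by
        intro ψ hψ
        simp only [Finset.coe_union, Set.mem_union, Finset.mem_coe, Finset.coe_image,
          Set.mem_image, Finset.mem_univ] at hψ
        rcases hψ with h | ⟨j, _, rfl⟩
        · exact hsp h
        · exact hnot j)
      have has : ∀ χ ∈ s, χ.Realize a := fun χ hχ => ha χ (Finset.mem_union_left _ hχ)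
      obtain ⟨j, hj⟩ := hgimp a has
      have h2 := ha _ (Finset.mem_union_right _ (Finset.mem_image_of_mem _ (Finset.mem_univ j)))
      have h3 : ¬ (Pf j 0).toFormula.Realize (Sum.elim a (Pf j 0).par) := by
        have h4 : (Pf j 0).not.Realize a ↔
            ¬ (Pf j 0).toFormula.Realize (Sum.elim a (Pf j 0).par) := by
          show (Pf j 0).toFormula.not.Realize (Sum.elim a (Pf j 0).par) ↔ _
          exact FirstOrder.Language.Formula.realize_not
        exact h4.1 h2
      exact h3 hj
    obtain ⟨j, hj⟩ := hjex
    by_cases hall : ∀ i : ℕ, Pf j i ∈ p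
    · exfalso
      obtain ⟨a, ha⟩ := hCon (Finset.image (fun i => Pf j i) (Finset.range (kk j))) (by
        intro ψ hψ
        simp only [Finset.coe_image, Set.mem_image, Finset.mem_coe, Finset.mem_range] at hψ
        obtain ⟨i, _, rfl⟩ := hψ
        exact hall i)
      refine hginc j (Finset.range (kk j)) (Finset.card_range _) ⟨a, fun i hi => ?_⟩
      exact ha _ (Finset.mem_image_of_mem _ hi)
    · push_neg at hall
      obtain ⟨i, hi⟩ := hall
      have hinot : (Pf j i).not ∈ p := (hComplete _ (hPfN j i)).resolve_left hi
      have hi1 : 1 ≤ i := by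
        rcases Nat.eq_zero_or_pos i with h | h
        · exact absurd (h ▸ hj) hi
        · exact h
      refine ⟨(ψs j).n, fun t => g j (if t = 0 then 0 else i + (t - 1)),
        (ψs j).toFormula, ?_, ?_, ?_⟩
      · intro nn ss tt hss htt
        have hσ : StrictMono (fun t : ℕ => if t = 0 then 0 else i + (t - 1)) := by
          intro a b hab
          dsimp only
          split_ifs <;> omega
        exact hgind j nn _ _ (hσ.comp hss) (hσ.comp htt)
      · have h0 : (if (0:ℕ) = 0 then 0 else i + (0 - 1)) = 0 := by norm_num
        show (⟨(ψs j).n, (ψs j).toFormula,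
          g j (if (0:ℕ) = 0 then 0 else i + (0 - 1))⟩ : PFormula L M m) ∈ p
        rw [h0]
        exact hj
      · have h1 : (if (1:ℕ) = 0 then 0 else i + (1 - 1)) = i := by norm_num
        show (⟨(ψs j).n, (ψs j).toFormula,
          g j (if (1:ℕ) = 0 then 0 else i + (1 - 1))⟩ : PFormula L M m).not ∈ p
        rw [h1]
        exact hinot
  apply main
  by_cases hM : Nonempty M
  case neg =>
    refine ⟨f, fun j i v => absurd ⟨f j i v⟩ hM, hindf, hincf, ?_⟩
    intro a has
    obtain ⟨j, hj⟩ := himp a has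
    refine ⟨j, ?_⟩
    rw [hf0 j]
    exact hj
  case pos =>
    obtain ⟨m0⟩ := hM
    obtain ⟨fbar, hfb⟩ : ∃ fb : ℕ → ℕ → ℕ → M,
        ∀ (j : Fin r) (i : ℕ) (v : Fin (ψs j).n), fb ↑j i ↑v = f j i v := by
      refine ⟨fun j' i v' =>
        if h1 : j' < r then
          (if h2 : v' < (ψs ⟨j', h1⟩).n then f ⟨j', h1⟩ i ⟨v', h2⟩ else m0)
        else m0, fun j i v => ?_⟩
      beta_reduce
      rw [dif_pos j.isLt]
      simp only [Fin.eta]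
      rw [dif_pos v.isLt]
    set enc : Fin r → ℕ → ℕ → ℕ := fun j i v => Nat.pair ↑j (Nat.pair i v) with henc
    set F : ℕ → M := fun t =>
      fbar (Nat.unpair t).1 (Nat.unpair (Nat.unpair t).2).1 (Nat.unpair (Nat.unpair t).2).2
      with hFdef
    have hFenc : ∀ (j : Fin r) (i : ℕ) (v : Fin (ψs j).n), F (enc j i ↑v) = f j i v := by
      intro j i v
      rw [hFdef, henc]
      simp only [Nat.unpair_pair]
      exact hfb j i v
    set C : Set M := A ∪ (⋃ χ ∈ (↑s : Set (PFormula L M m)), Set.range χ.par) with hCdef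
    have hAC : A ⊆ C := Set.subset_union_left
    have hparC : ∀ χ ∈ s, ∀ v, χ.par v ∈ C := by
      intro χ hχ v
      exact Set.mem_union_right _ (Set.mem_biUnion (Finset.mem_coe.2 hχ) (Set.mem_range_self v))
    have hCN : C ⊆ N := by
      refine Set.union_subset hAN ?_
      intro x hx
      simp only [Set.mem_iUnion, exists_prop] at hx
      obtain ⟨χ, hχ, v, rfl⟩ := hx
      exact hOver χ (hsp hχ) v
    have hCcard : #↑C ≤ #A + ℵ₀ := by
      refine (mk_union_le _ _).trans (add_le_add le_rfl ?_)
      have hfin : (⋃ χ ∈ (↑s : Set (PFormula L M m)), Set.range χ.par).Finite :=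
        Set.Finite.biUnion s.finite_toSet (fun χ _ => Set.finite_range _)
      exact hfin.lt_aleph0.le
    obtain ⟨G, hGN, hst⟩ := ForkAux.exists_copy hsat hCN hCcard F
    refine ⟨fun j i v => G (enc j i ↑v), fun j i v => hGN _, ?_, ?_, ?_⟩
    -- indiscernibility over A
    · intro j nn ss tt hss htt
      have mk1 : ∀ su : Fin nn → ℕ, SameTypeOver L C
          (fun q : Fin nn × Fin (ψs j).n => f j (su q.1) q.2)
          (fun q : Fin nn × Fin (ψs j).n => G (enc j (su q.1) ↑q.2)) := by
        intro su
        have h1 := ForkAux.sto_comp hst (fun q : Fin nn × Fin (ψs j).n => enc j (su q.1) ↑q.2)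
        have h2 : (F ∘ fun q : Fin nn × Fin (ψs j).n => enc j (su q.1) ↑q.2)
            = fun q : Fin nn × Fin (ψs j).n => f j (su q.1) q.2 :=
          funext fun q => hFenc j (su q.1) q.2
        rw [h2] at h1
        exact h1
      exact ForkAux.sto_trans
        (ForkAux.sto_trans (ForkAux.sto_symm (ForkAux.sto_mono hAC (mk1 ss)))
          (hindf j nn ss tt hss htt))
        (ForkAux.sto_mono hAC (mk1 tt))
    -- k-inconsistency
    · intro j sf hcard
      set Θ : L.Formula (Fin m ⊕ ℕ) := ForkAux.fsInf sf
        (fun i => (ψs j).toFormula.relabel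
          (Sum.map id (fun v : Fin (ψs j).n => enc j i ↑v))) with hΘ
      set Θex : L.Formula ℕ := ForkAux.fsExs Θ (Sum.elim Sum.inr Sum.inl) with hΘex
      have hsem : ∀ w : ℕ → M, Θex.Realize w ↔
          ∃ a : Fin m → M, ∀ i ∈ sf,
            (ψs j).toFormula.Realize (Sum.elim a (fun v : Fin (ψs j).n => w (enc j i ↑v))) := by
        intro w
        rw [hΘex, ForkAux.realize_fsExs]
        refine exists_congr fun a => ?_
        have hval : (fun y => Sum.elim w a (Sum.elim Sum.inr Sum.inl y)) = Sum.elim a w := by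
          funext y; rcases y with y | y <;> rfl
        rw [hval, hΘ]
        refine Iff.trans (ForkAux.realize_fsInf sf _ (Sum.elim a w) default)
          (forall₂_congr fun i hi => ?_)
        refine Iff.trans FirstOrder.Language.Formula.realize_relabel ?_
        have hc : (Sum.elim a w) ∘ (Sum.map id (fun v : Fin (ψs j).n => enc j i ↑v))
            = Sum.elim a (fun v : Fin (ψs j).n => w (enc j i ↑v)) := by
          funext y; rcases y with y | y <;> rfl
        rw [hc]
      intro hcon
      obtain ⟨a, ha⟩ := hcon
      have hG : Θex.Realize G := (hsem G).2 ⟨a, ha⟩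
      have htr := hst 0 (Θex.relabel Sum.inl) (fun i : Fin 0 => i.elim0) (fun i => i.elim0)
      rw [FirstOrder.Language.Formula.realize_relabel, FirstOrder.Language.Formula.realize_relabel,
        show (Sum.elim F (fun i : Fin 0 => i.elim0)) ∘ Sum.inl = F from rfl,
        show (Sum.elim G (fun i : Fin 0 => i.elim0)) ∘ Sum.inl = G from rfl] at htr
      have hF : Θex.Realize F := htr.2 hG
      obtain ⟨a', ha'⟩ := (hsem F).1 hF
      refine hincf j sf hcard ⟨a', fun i hi => ?_⟩
      have h3 := ha' i hi
      have h4 : (fun v : Fin (ψs j).n => F (enc j i ↑v)) = f j i := funext fun v => hFenc j i v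
      rwa [h4] at h3
    -- the implication
    · intro a has
      by_contra hno
      push_neg at hno
      set B1 : L.Formula ((Fin m ⊕ ℕ) ⊕ ↥C) := ForkAux.fsInf s.attach
        (fun χ => χ.1.toFormula.relabel
          (Sum.elim (fun x => Sum.inl (Sum.inl x))
            (fun v => Sum.inr ⟨χ.1.par v, hparC χ.1 χ.2 v⟩))) with hB1
      set B2 : L.Formula ((Fin m ⊕ ℕ) ⊕ ↥C) := ForkAux.fsInf
        (Finset.univ : Finset (Fin r))
        (fun j => ((ψs j).toFormula.relabel
          (Sum.elim (fun x => Sum.inl (Sum.inl x))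
            (fun v : Fin (ψs j).n => Sum.inl (Sum.inr (enc j 0 ↑v))))).not) with hB2
      set fex : ((Fin m ⊕ ℕ) ⊕ ↥C) → ((ℕ ⊕ ↥C) ⊕ Fin m) :=
        Sum.elim (Sum.elim (fun x => Sum.inr x) (fun t => Sum.inl (Sum.inl t)))
          (fun u => Sum.inl (Sum.inr u)) with hfex
      set Θex : L.Formula (ℕ ⊕ ↥C) := ForkAux.fsExs (B1 ⊓ B2) fex with hΘex
      have hB1c : ∀ (χ : PFormula L M m) (hχ : χ ∈ s) (b : Fin m → M) (w : ℕ → M),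
          FirstOrder.Language.Formula.Realize (L := L) (M := M)
            (χ.toFormula.relabel (Sum.elim (fun x => Sum.inl (Sum.inl x))
              (fun v => Sum.inr ⟨χ.par v, hparC χ hχ v⟩)))
            (Sum.elim (Sum.elim b w) (fun u : ↥C => (u : M))) ↔ χ.Realize b := by
        intro χ hχ b w
        rw [FirstOrder.Language.Formula.realize_relabel]
        have hc : (Sum.elim (Sum.elim b w) (fun u : ↥C => (u : M))) ∘
            (Sum.elim (fun x => Sum.inl (Sum.inl x))
              (fun v => Sum.inr ⟨χ.par v, hparC χ hχ v⟩)) = Sum.elim b χ.par := by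
          funext y; rcases y with y | v <;> rfl
        rw [hc]
        exact Iff.rfl
      have hB2c : ∀ (j : Fin r) (b : Fin m → M) (w : ℕ → M),
          FirstOrder.Language.Formula.Realize (L := L) (M := M)
            (((ψs j).toFormula.relabel (Sum.elim (fun x => Sum.inl (Sum.inl x))
              (fun v : Fin (ψs j).n => Sum.inl (Sum.inr (enc j 0 ↑v))))).not)
            (Sum.elim (Sum.elim b w) (fun u : ↥C => (u : M))) ↔
          ¬ (ψs j).toFormula.Realize (Sum.elim b (fun v : Fin (ψs j).n => w (enc j 0 ↑v))) := by
        intro j b w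
        rw [FirstOrder.Language.Formula.realize_not, FirstOrder.Language.Formula.realize_relabel]
        have hc : (Sum.elim (Sum.elim b w) (fun u : ↥C => (u : M))) ∘
            (Sum.elim (fun x => Sum.inl (Sum.inl x))
              (fun v : Fin (ψs j).n => Sum.inl (Sum.inr (enc j 0 ↑v))))
            = Sum.elim b (fun v : Fin (ψs j).n => w (enc j 0 ↑v)) := by
          funext y; rcases y with y | v <;> rfl
        rw [hc]
      have hsem : ∀ w : ℕ → M, Θex.Realize (Sum.elim w (fun u : ↥C => (u : M))) ↔
          ∃ b : Fin m → M, (∀ χ ∈ s, χ.Realize b) ∧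
            ∀ j : Fin r, ¬ (ψs j).toFormula.Realize (Sum.elim b (fun v : Fin (ψs j).n => w (enc j 0 ↑v))) := by
        intro w
        rw [hΘex, ForkAux.realize_fsExs]
        refine exists_congr fun b => ?_
        have hval : (fun y => Sum.elim (Sum.elim w (fun u : ↥C => (u : M))) b (fex y))
            = Sum.elim (Sum.elim b w) (fun u : ↥C => (u : M)) := by
          funext y; rcases y with (y | t) | u <;> rw [hfex] <;> rfl
        rw [hval, FirstOrder.Language.Formula.realize_inf]
        apply and_congr
        · rw [hB1]
          refine Iff.trans (ForkAux.realize_fsInf s.attach _ _ default) ?_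
          constructor
          · intro h χ hχ
            exact (hB1c χ hχ b w).1 (h ⟨χ, hχ⟩ (s.mem_attach _))
          · intro h χ' _
            exact (hB1c χ'.1 χ'.2 b w).2 (h χ'.1 χ'.2)
        · rw [hB2]
          refine Iff.trans (ForkAux.realize_fsInf Finset.univ _ _ default) ?_
          constructor
          · intro h j
            exact (hB2c j b w).1 (h j (Finset.mem_univ j))
          · intro h j _
            exact (hB2c j b w).2 (h j)
      have hkey := ForkAux.key_transfer hst Θex
      have hGside : Θex.Realize (Sum.elim G (fun u : ↥C => (u : M))) :=
        (hsem G).2 ⟨a, has, hno⟩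
      have hFside := hkey.2 hGside
      obtain ⟨b, hb1, hb2⟩ := (hsem F).1 hFside
      obtain ⟨j, hj⟩ := himp b hb1
      refine hb2 j ?_
      have h4 : (fun v : Fin (ψs j).n => F (enc j 0 ↑v)) = (ψs j).par := by
        funext v
        rw [hFenc j 0 v, hf0 j]
      rw [h4]
      exact hj
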